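/- Let A ∈ ℝ^{n×p} and B ∈ ℝ^{n×q} be column full rank matrices with n > p+q, and suppose C = [A, B] is also column full rank. Let z ∈ ℝ^n with Aᵀz = 0, and b ∈ Im A. Then the least-squares solution ŵ = (ŵ₁, ŵ₂) of min_w ‖Cw − (b+z)‖₂ is given by ŵ₁ = A⁺b − A⁺B M⁻¹ Bᵀz and ŵ₂ = M⁻¹ Bᵀz, where M = BᵀB − BᵀA(AᵀA)⁻¹AᵀB and A⁺ = (AᵀA)⁻¹Aᵀ. -/

import Mathlib

open Matrix BigOperators

/-- Euclidean (L2) norm of a vector in `ℝ^n`. -/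
noncomputable def l2norm {n : ℕ} (x : Fin n → ℝ) : ℝ := Real.sqrt (∑ i, x i ^ 2)

/-- Pseudoinverse `A⁺ = (AᵀA)⁻¹ Aᵀ` of a full column rank matrix. -/
noncomputable def pinv {n p : ℕ} (A : Matrix (Fin n) (Fin p) ℝ) :
    Matrix (Fin p) (Fin n) ℝ := (Aᵀ * A)⁻¹ * Aᵀ

lemma aux_isUnit {m : Type*} [Fintype m] [DecidableEq m] (N : Matrix m m ℝ)
    (h : N.rank = Fintype.card m) : IsUnit N := by
  rw [← Matrix.mulVec_injective_iff_isUnit]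
  have hsurj : Function.Surjective N.mulVecLin := by
    rw [← LinearMap.range_eq_top]
    apply Submodule.eq_top_of_finrank_eq
    rw [← Matrix.rank, h]
    simp
  exact LinearMap.injective_iff_surjective.mpr hsurj

/-- Block formula for the least-squares solution: with `C = [A,B]` full column rank,
`b ∈ Im A`, `Aᵀ z = 0` and `M = BᵀB − BᵀA(AᵀA)⁻¹AᵀB`, the minimizer
`ŵ = (ŵ₁, ŵ₂)` of `‖C w − (b+z)‖₂` satisfies `ŵ₁ = A⁺b − A⁺ B M⁻¹ Bᵀ z` and
`ŵ₂ = M⁻¹ Bᵀ z`. -/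
theorem stmt4 {n p q : ℕ} (hn : p + q < n)
    (A : Matrix (Fin n) (Fin p) ℝ) (B : Matrix (Fin n) (Fin q) ℝ)
    (hA : A.rank = p) (hB : B.rank = q)
    (hC : (fromCols A B).rank = p + q)
    (b z : Fin n → ℝ) (hb : ∃ u, b = A *ᵥ u) (hz : Aᵀ *ᵥ z = 0)
    (M : Matrix (Fin q) (Fin q) ℝ)
    (hM : M = Bᵀ * B - Bᵀ * A * (Aᵀ * A)⁻¹ * Aᵀ * B)
    (wh : Fin p ⊕ Fin q → ℝ)
    (hwh : ∀ w : Fin p ⊕ Fin q → ℝ,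
      l2norm ((fromCols A B) *ᵥ wh - (b + z)) ≤
        l2norm ((fromCols A B) *ᵥ w - (b + z))) :
    (fun i => wh (Sum.inl i)) = pinv A *ᵥ b - (pinv A * B * M⁻¹ * Bᵀ) *ᵥ z ∧
    (fun j => wh (Sum.inr j)) = (M⁻¹ * Bᵀ) *ᵥ z := by
  obtain ⟨u, hu⟩ := hb
  set C : Matrix (Fin n) (Fin p ⊕ Fin q) ℝ := fromCols A B with hCdef
  have hAA : IsUnit (Aᵀ * A) := by
    apply aux_isUnit
    rw [Matrix.rank_transpose_mul_self, hA, Fintype.card_fin]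
  have hAAdet : IsUnit (Aᵀ * A).det := (Matrix.isUnit_iff_isUnit_det _).mp hAA
  have hCC : IsUnit (Cᵀ * C) := by
    apply aux_isUnit
    rw [Matrix.rank_transpose_mul_self, hC]
    simp
  have hCCblocks : Cᵀ * C = fromBlocks (Aᵀ * A) (Aᵀ * B) (Bᵀ * A) (Bᵀ * B) := by
    rw [hCdef, transpose_fromCols, fromRows_mul_fromCols]
  have hInv : Invertible (Aᵀ * A) := hAA.invertible
  have hMunit : IsUnit M := by
    have h2 := hCC
    rw [hCCblocks, Matrix.isUnit_fromBlocks_iff_of_invertible₁₁] at h2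
    rw [hM, show (Aᵀ * A)⁻¹ = ⅟(Aᵀ * A) from (Matrix.invOf_eq_nonsing_inv _).symm]
    rwa [show Bᵀ * A * ⅟(Aᵀ * A) * (Aᵀ * B) = Bᵀ * A * ⅟(Aᵀ * A) * Aᵀ * B by
      simp only [Matrix.mul_assoc]] at h2
  have hMdet : IsUnit M.det := (Matrix.isUnit_iff_isUnit_det _).mp hMunit
  -- key matrix identities
  have hPA : pinv A * A = 1 := by
    rw [pinv, Matrix.mul_assoc, Matrix.nonsing_inv_mul _ hAAdet]
  have hA1 : Aᵀ * A * pinv A = Aᵀ := by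
    rw [pinv, ← Matrix.mul_assoc, Matrix.mul_nonsing_inv _ hAAdet, Matrix.one_mul]
  have hA2 : Bᵀ * A * pinv A * B = Bᵀ * B - M := by
    rw [hM, pinv, sub_sub_cancel]; simp only [Matrix.mul_assoc]
  have hA3 : Bᵀ * A * pinv A * A = Bᵀ * A := by
    rw [Matrix.mul_assoc (Bᵀ * A), hPA, Matrix.mul_one]
  -- the candidate solution
  set w2 : Fin q → ℝ := (M⁻¹ * Bᵀ) *ᵥ z with hw2
  set w1 : Fin p → ℝ := pinv A *ᵥ b - (pinv A * B * M⁻¹ * Bᵀ) *ᵥ z with hw1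
  have hw1' : w1 = pinv A *ᵥ (b - B *ᵥ w2) := by
    rw [hw1, hw2, Matrix.mulVec_sub]
    congr 1
    rw [Matrix.mulVec_mulVec, Matrix.mulVec_mulVec]
    congr 1
    simp only [Matrix.mul_assoc]
  set ws : Fin p ⊕ Fin q → ℝ := Sum.elim w1 w2 with hws
  set r : Fin n → ℝ := C *ᵥ ws - (b + z) with hr
  have hCws : C *ᵥ ws = A *ᵥ w1 + B *ᵥ w2 := by
    rw [hws, hCdef, fromCols_mulVec_sumElim]
  have k4 : M *ᵥ w2 = Bᵀ *ᵥ z := by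
    rw [hw2, Matrix.mulVec_mulVec, ← Matrix.mul_assoc, Matrix.mul_nonsing_inv _ hMdet,
      Matrix.one_mul]
  -- residual orthogonal to columns of C
  have hAr : Aᵀ *ᵥ r = 0 := by
    rw [hr, hCws, hw1']
    simp only [Matrix.mulVec_sub, Matrix.mulVec_add, Matrix.mulVec_mulVec,
      ← Matrix.mul_assoc]
    simp only [hA1, hz]
    abel
  have hBr : Bᵀ *ᵥ r = 0 := by
    rw [hr, hCws, hw1', hu]
    simp only [Matrix.mulVec_sub, Matrix.mulVec_add, Matrix.mulVec_mulVec,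
      ← Matrix.mul_assoc]
    simp only [hA3, hA2, Matrix.sub_mulVec]
    rw [k4]
    abel
  have hCr : Cᵀ *ᵥ r = 0 := by
    rw [hCdef, transpose_fromCols, fromRows_mulVec, hAr, hBr]
    ext (i | j) <;> rfl
  -- wh = ws
  have hle := hwh ws
  rw [← hr] at hle
  have hdec : C *ᵥ wh - (b + z) = C *ᵥ (wh - ws) + r := by
    rw [hr, Matrix.mulVec_sub]; abel
  have hcross : ∑ i, (C *ᵥ (wh - ws)) i * r i = 0 := by
    have h3 : (C *ᵥ (wh - ws)) ⬝ᵥ r = 0 := by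
      rw [show (C *ᵥ (wh - ws)) ⬝ᵥ r = r ⬝ᵥ (C *ᵥ (wh - ws)) from dotProduct_comm _ _,
        Matrix.dotProduct_mulVec, ← Matrix.mulVec_transpose, hCr]
      simp [dotProduct]
    simpa [dotProduct] using h3
  have hsum : ∑ i, (C *ᵥ wh - (b + z)) i ^ 2
      = ∑ i, (C *ᵥ (wh - ws)) i ^ 2 + ∑ i, r i ^ 2 := by
    rw [hdec]
    have h2 : ∀ i, (C *ᵥ (wh - ws) + r) i ^ 2
        = (C *ᵥ (wh - ws)) i ^ 2 + 2 * ((C *ᵥ (wh - ws)) i * r i) + r i ^ 2 := by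
      intro i; simp only [Pi.add_apply]; ring
    simp only [h2, Finset.sum_add_distrib, ← Finset.mul_sum]
    rw [hcross]; ring
  have hle2 : ∑ i, (C *ᵥ wh - (b + z)) i ^ 2 ≤ ∑ i, r i ^ 2 := by
    have h1 : (0:ℝ) ≤ ∑ i, r i ^ 2 := Finset.sum_nonneg fun i _ => sq_nonneg _
    rw [l2norm, l2norm] at hle
    exact (Real.sqrt_le_sqrt_iff h1).mp hle
  have hCd : C *ᵥ (wh - ws) = 0 := by
    have hzero : ∑ i, (C *ᵥ (wh - ws)) i ^ 2 ≤ 0 := by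
      rw [hsum] at hle2; linarith
    have hzz : ∑ i, (C *ᵥ (wh - ws)) i ^ 2 = 0 :=
      le_antisymm hzero (Finset.sum_nonneg fun i _ => sq_nonneg _)
    ext i
    have h4 := (Finset.sum_eq_zero_iff_of_nonneg (fun i _ => sq_nonneg _)).mp hzz i
      (Finset.mem_univ i)
    simpa using pow_eq_zero_iff (n := 2) (by norm_num) |>.mp h4
  have hwseq : wh = ws := by
    have h0 : (Cᵀ * C) *ᵥ (wh - ws) = 0 := by
      rw [← Matrix.mulVec_mulVec, hCd, Matrix.mulVec_zero]
    have hinj := Matrix.mulVec_injective_iff_isUnit.mpr hCC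
    have h5 := hinj (h0.trans (Matrix.mulVec_zero _).symm)
    exact sub_eq_zero.mp h5
  constructor
  · funext i; rw [hwseq]; rfl
  · funext j; rw [hwseq]; rfl
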